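/- Let (B₁, φ̃₁) and (B₂, φ̃₂) be noncommutative probability spaces over ℂ, let P ∈ B₁ be an idempotent separating φ̃₁ and Q ∈ B₂ an idempotent separating φ̃₂, and let 𝒜₁ ⊆ B₁, 𝒜₂ ⊆ B₂ be (not necessarily unital) subalgebras. Then the non-unital subalgebras {a ⊗ Q : a ∈ 𝒜₁} and {P ⊗ b : b ∈ 𝒜₂} of B₁ ⊗[ℂ] B₂ are boolean independent with respect to φ = φ̃₁ ⊗ φ̃₂; that is, φ(x₁ x₂ ⋯ xₙ) = φ(x₁)·φ(x₂)⋯φ(xₙ) whenever each x_k lies in one of these two subalgebras and consecutive letters x_k, x_{k+1} lie in different ones. -/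
import Mathlib


open scoped TensorProduct

/-- boolean independence of `{a ⊗ Q}` and `{P ⊗ b}` w.r.t. the
tensor product state `φ = φ̃₁ ⊗ φ̃₂`. -/
theorem boolean_independence_tensor_realization
    {B₁ B₂ : Type*} [Ring B₁] [Algebra ℂ B₁] [Ring B₂] [Algebra ℂ B₂]
    (φ₁ : B₁ →ₗ[ℂ] ℂ) (φ₂ : B₂ →ₗ[ℂ] ℂ)
    (hφ₁1 : φ₁ 1 = 1) (hφ₂1 : φ₂ 1 = 1)
    (P : B₁) (Q : B₂)
    (hPidem : P * P = P) (hP1 : φ₁ P = 1)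
    (hPsep : ∀ x y : B₁, φ₁ (x * P * y) = φ₁ x * φ₁ y)
    (hQidem : Q * Q = Q) (hQ1 : φ₂ Q = 1)
    (hQsep : ∀ x y : B₂, φ₂ (x * Q * y) = φ₂ x * φ₂ y)
    (𝒜₁ : NonUnitalSubalgebra ℂ B₁) (𝒜₂ : NonUnitalSubalgebra ℂ B₂)
    (φ : (B₁ ⊗[ℂ] B₂) →ₗ[ℂ] ℂ)
    (hφ : ∀ (x : B₁) (y : B₂), φ (x ⊗ₜ[ℂ] y) = φ₁ x * φ₂ y)
    (n : ℕ) (hn : 1 ≤ n)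
    (x : Fin n → B₁ ⊗[ℂ] B₂) (c : Fin n → Bool)
    (hx : ∀ k : Fin n,
      x k ∈ (if c k then {z : B₁ ⊗[ℂ] B₂ | ∃ a ∈ 𝒜₁, z = a ⊗ₜ[ℂ] Q}
             else {z : B₁ ⊗[ℂ] B₂ | ∃ b ∈ 𝒜₂, z = P ⊗ₜ[ℂ] b}))
    (halt : ∀ (k : ℕ) (h : k + 1 < n),
      c ⟨k, Nat.lt_of_succ_lt h⟩ ≠ c ⟨k + 1, h⟩) :
    φ (List.ofFn x).prod = ∏ k : Fin n, φ (x k) := by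
  have hPu : ∀ u : B₁, φ₁ (P * u) = φ₁ u := fun u => by
    simpa [hφ₁1] using hPsep 1 u
  have hQv : ∀ v : B₂, φ₂ (Q * v) = φ₂ v := fun v => by
    simpa [hφ₂1] using hQsep 1 v
  -- key lemma 1
  have key1 : ∀ (a : B₁) (b : B₂) (r : B₁ ⊗[ℂ] B₂),
      φ ((a ⊗ₜ[ℂ] Q) * ((P ⊗ₜ[ℂ] b) * r)) = φ₁ a * φ ((P ⊗ₜ[ℂ] b) * r) := by
    intro a b r
    induction r using TensorProduct.induction_on with
    | zero => simp
    | tmul u v =>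
      rw [← mul_assoc, Algebra.TensorProduct.tmul_mul_tmul,
        Algebra.TensorProduct.tmul_mul_tmul, Algebra.TensorProduct.tmul_mul_tmul,
        hφ, hφ, hPsep a u, hPu, mul_assoc Q b v, hQv]
      ring
    | add s t hs ht =>
      rw [mul_add, mul_add, map_add, map_add, hs, ht]
      ring
  have key2 : ∀ (b : B₂) (a : B₁) (r : B₁ ⊗[ℂ] B₂),
      φ ((P ⊗ₜ[ℂ] b) * ((a ⊗ₜ[ℂ] Q) * r)) = φ₂ b * φ ((a ⊗ₜ[ℂ] Q) * r) := by
    intro b a r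
    induction r using TensorProduct.induction_on with
    | zero => simp
    | tmul u v =>
      rw [← mul_assoc, Algebra.TensorProduct.tmul_mul_tmul,
        Algebra.TensorProduct.tmul_mul_tmul, Algebra.TensorProduct.tmul_mul_tmul,
        hφ, hφ, hQsep b v, hQv, mul_assoc P a u, hPu]
      ring
    | add s t hs ht =>
      rw [mul_add, mul_add, map_add, map_add, hs, ht]
      ring
  obtain ⟨m, rfl⟩ : ∃ m, n = m + 1 := ⟨n - 1, by omega⟩
  induction m with
  | zero =>
    simp
  | succ m ih =>
    set y : Fin (m + 1) → B₁ ⊗[ℂ] B₂ := fun i => x i.succ with hy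
    set d : Fin (m + 1) → Bool := fun i => c i.succ with hd
    have hx' : ∀ k : Fin (m + 1),
        y k ∈ (if d k then {z : B₁ ⊗[ℂ] B₂ | ∃ a ∈ 𝒜₁, z = a ⊗ₜ[ℂ] Q}
               else {z : B₁ ⊗[ℂ] B₂ | ∃ b ∈ 𝒜₂, z = P ⊗ₜ[ℂ] b}) :=
      fun k => hx k.succ
    have halt' : ∀ (k : ℕ) (h : k + 1 < m + 1),
        d ⟨k, Nat.lt_of_succ_lt h⟩ ≠ d ⟨k + 1, h⟩ := by
      intro k h
      have := halt (k + 1) (by omega)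
      simpa [hd, Fin.succ] using this
    have ihy := ih (by omega) y d hx' halt'
    have hlist : (List.ofFn x).prod = x 0 * (List.ofFn y).prod := by
      rw [List.ofFn_succ, List.prod_cons]
    have hprod : ∏ k : Fin (m + 2), φ (x k) = φ (x 0) * ∏ k : Fin (m + 1), φ (y k) :=
      Fin.prod_univ_succ _
    have hlist2 : (List.ofFn y).prod = x 1 * (List.ofFn fun i : Fin m => x i.succ.succ).prod := by
      rw [List.ofFn_succ, List.prod_cons]
      congr 1
    have h01 : c 0 ≠ c 1 := by
      have := halt 0 (by omega)
      simpa [show (⟨0, by omega⟩ : Fin (m + 2)) = 0 from rfl,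
        show (⟨1, by omega⟩ : Fin (m + 2)) = 1 from rfl] using this
    have hx0 := hx 0
    have hx1 := hx 1
    rw [hlist, hprod, ← ihy]
    cases hc : c 0 with
    | true =>
      rw [hc] at hx0
      have hc1 : c 1 = false := by
        cases h : c 1 with
        | false => rfl
        | true => exact absurd (hc.trans h.symm) h01
      rw [hc1] at hx1
      simp only [if_true, if_false, Set.mem_setOf_eq] at hx0 hx1
      obtain ⟨a, _, ha⟩ := hx0
      obtain ⟨b, _, hb⟩ := hx1
      rw [hlist2, ha, hb, key1, hφ, hQ1, mul_one]
    | false =>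
      rw [hc] at hx0
      have hc1 : c 1 = true := by
        cases h : c 1 with
        | true => rfl
        | false => exact absurd (hc.trans h.symm) h01
      rw [hc1] at hx1
      simp only [if_true, if_false, Set.mem_setOf_eq] at hx0 hx1
      obtain ⟨b, _, hb⟩ := hx0
      obtain ⟨a, _, ha⟩ := hx1
      rw [hlist2, hb, ha, key2, hφ, hP1, one_mul]
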